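/- Let n ≥ 1, θ ∈ ℝⁿ, and let G₁, …, G_n be independent standard Gumbel random variables. Then almost surely the maximizer of i ↦ θ_i + G_i is unique, and for every j ∈ {1, …, n}, P(θ_j + G_j > θ_i + G_i for all i ≠ j) = exp(θ_j) / Σ_{i=1}^n exp(θ_i). (This is the Gumbel-max trick underlying the coupling D = limit of softmax_τ(θ + G) used to define the straight-through Gumbel-Softmax and Gumbel-Rao estimators.) -/

import Mathlib

open MeasureTheory Set

open MeasureTheory Set

/-- Strict CDF from non-strict, by continuity of the Gumbel CDF. -/
lemma gumbel_lt_aux {Ω : Type*} [MeasurableSpace Ω] (μ : Measure Ω) (g : Ω → ℝ)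
    (h : ∀ x, μ {ω | g ω ≤ x} = ENNReal.ofReal (Real.exp (-Real.exp (-x)))) (y : ℝ) :
    μ {ω | g ω < y} = ENNReal.ofReal (Real.exp (-Real.exp (-y))) := by
  have hU : {ω | g ω < y} = ⋃ k : ℕ, {ω | g ω ≤ y - 1/(k+1 : ℝ)} := by
    ext ω
    simp only [Set.mem_setOf_eq, Set.mem_iUnion]
    constructor
    · intro hω
      obtain ⟨k, hk⟩ := exists_nat_one_div_lt (sub_pos.2 hω)
      exact ⟨k, by linarith⟩
    · rintro ⟨k, hk⟩
      have : (0:ℝ) < 1/(k+1 : ℝ) := by positivity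
      linarith
  have hmono : Monotone (fun k : ℕ => {ω | g ω ≤ y - 1/(k+1 : ℝ)}) := by
    intro a b hab ω hω
    simp only [Set.mem_setOf_eq] at *
    have hab' : (a:ℝ) + 1 ≤ (b:ℝ) + 1 := by exact_mod_cast Nat.succ_le_succ hab
    have : (1:ℝ)/((b:ℝ)+1) ≤ 1/((a:ℝ)+1) := one_div_le_one_div_of_le (by positivity) hab'
    linarith
  have h1 := tendsto_measure_iUnion_atTop (μ := μ) hmono
  have h2 : Filter.Tendsto (fun k : ℕ => μ {ω | g ω ≤ y - 1/(k+1 : ℝ)}) Filter.atTop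
      (nhds (ENNReal.ofReal (Real.exp (-Real.exp (-y))))) := by
    simp only [h]
    have hc : Continuous (fun t : ℝ => ENNReal.ofReal (Real.exp (-Real.exp (-t)))) :=
      ENNReal.continuous_ofReal.comp (Real.continuous_exp.comp
        (Real.continuous_exp.comp continuous_neg).neg)
    have ht : Filter.Tendsto (fun k : ℕ => y - 1/((k:ℝ)+1)) Filter.atTop (nhds y) := by
      simpa using tendsto_const_nhds.sub (tendsto_one_div_add_atTop_nhds_zero_nat (𝕜 := ℝ))
    exact (hc.tendsto y).comp ht
  rw [hU]
  exact tendsto_nhds_unique h1 h2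

lemma gumbel_lintegral_aux (ν : Measure ℝ) [IsProbabilityMeasure ν]
    (hcdf : ∀ x, ν (Iic x) = ENNReal.ofReal (Real.exp (-Real.exp (-x))))
    (c : ℝ) (hc : 0 ≤ c) :
    ∫⁻ x, ENNReal.ofReal (Real.exp (-(c * Real.exp (-x)))) ∂ν
      = ENNReal.ofReal (1 / (1 + c)) := by
  rcases eq_or_lt_of_le hc with h0 | hc
  · simp [← h0]
  have hcont : Continuous fun x : ℝ => Real.exp (-(c * Real.exp (-x))) := by
    exact Real.continuous_exp.comp ((continuous_const.mul (Real.continuous_exp.comp continuous_neg)).neg)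
  rw [lintegral_eq_lintegral_meas_lt ν
    (Filter.Eventually.of_forall fun x => (Real.exp_pos _).le) hcont.measurable.aemeasurable]
  have key : ∀ t ∈ Ioi (0:ℝ), ν {a | t < Real.exp (-(c * Real.exp (-a)))}
      = ENNReal.ofReal (if t < 1 then 1 - t ^ (1/c) else 0) := by
    intro t ht
    rw [mem_Ioi] at ht
    by_cases h1 : t < 1
    · -- the set is Ioi s
      have hL : 0 < -Real.log t := by
        simpa using Real.log_neg ht h1
      set s : ℝ := -Real.log ((-Real.log t)/c) with hs
      have hset : {a | t < Real.exp (-(c * Real.exp (-a)))} = Ioi s := by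
        ext a
        simp only [mem_setOf_eq, mem_Ioi, hs]
        rw [← Real.log_lt_iff_lt_exp ht]
        constructor
        · intro h
          rw [neg_lt, Real.lt_log_iff_exp_lt (by positivity)]
          rw [lt_div_iff₀ hc, mul_comm]
          linarith [h]
        · intro h
          rw [neg_lt, Real.lt_log_iff_exp_lt (by positivity), lt_div_iff₀ hc, mul_comm] at h
          linarith [h]
      rw [hset]
      have hIoi : (Ioi s) = (Iic s)ᶜ := by simp
      rw [hIoi, measure_compl measurableSet_Iic (measure_ne_top ν _), measure_univ, hcdf]
      have hes : Real.exp (-s) = (-Real.log t)/c := by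
        rw [hs, neg_neg, Real.exp_log (by positivity)]
      have hval : Real.exp (-Real.exp (-s)) = t ^ (1/c) := by
        rw [hes]
        have : -((-Real.log t)/c) = Real.log t * (1/c) := by ring
        rw [this, Real.exp_mul, Real.exp_log ht]
      rw [hval, if_pos h1]
      rw [ENNReal.ofReal_sub _ (Real.rpow_nonneg ht.le _), ENNReal.ofReal_one]
    · -- empty set
      have hset : {a | t < Real.exp (-(c * Real.exp (-a)))} = (∅ : Set ℝ) := by
        ext a
        simp only [mem_setOf_eq, mem_empty_iff_false, iff_false, not_lt]
        have : Real.exp (-(c * Real.exp (-a))) < 1 := by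
          rw [← Real.exp_zero]
          apply Real.exp_lt_exp.2
          have := Real.exp_pos (-a)
          nlinarith
        linarith [not_lt.1 h1]
      rw [hset, if_neg h1]
      simp
  rw [setLIntegral_congr_fun measurableSet_Ioi key]
  have hsplit : (Ioi (0:ℝ)) = Ioo 0 1 ∪ Ici 1 := by
    ext x; simp only [mem_Ioi, mem_union, mem_Ioo, mem_Ici]
    constructor
    · intro h; by_cases h' : x < 1
      · exact Or.inl ⟨h, h'⟩
      · exact Or.inr (not_lt.1 h')
    · rintro (⟨h, _⟩ | h) <;> linarith
  rw [hsplit, lintegral_union measurableSet_Ici (by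
    rw [Set.disjoint_left]; rintro x ⟨_, h1⟩ h2; exact absurd h2 (not_le.2 h1))]
  have hzero : ∫⁻ t in Ici (1:ℝ), ENNReal.ofReal (if t < 1 then 1 - t ^ (1/c) else 0) = 0 := by
    rw [setLIntegral_congr_fun measurableSet_Ici
      (fun t ht => by rw [if_neg (not_lt.2 ht)])]
    simp
  rw [hzero, add_zero]
  have hcongr : ∫⁻ t in Ioo (0:ℝ) 1, ENNReal.ofReal (if t < 1 then 1 - t ^ (1/c) else 0)
      = ∫⁻ t in Ioo (0:ℝ) 1, ENNReal.ofReal (1 - t ^ (1/c)) := by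
    apply setLIntegral_congr_fun measurableSet_Ioo
    exact (fun t ht => by rw [if_pos ht.2])
  rw [hcongr]
  have hint : IntegrableOn (fun t : ℝ => 1 - t ^ (1/c)) (Ioo 0 1) volume := by
    have hm : Continuous (fun t : ℝ => 1 - t ^ (1/c)) :=
      continuous_const.sub (Real.continuous_rpow_const (by positivity))
    apply Measure.integrableOn_of_bounded (M := 1) (by simp) hm.aestronglyMeasurable
    · rw [ae_restrict_iff' measurableSet_Ioo]
      apply Filter.Eventually.of_forall
      intro t ht
      rw [Real.norm_eq_abs, abs_le]
      have h1 : (0:ℝ) ≤ t ^ (1/c) := Real.rpow_nonneg ht.1.le _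
      have h2 : t ^ (1/c) ≤ 1 := Real.rpow_le_one ht.1.le ht.2.le (by positivity)
      constructor <;> linarith
  rw [← ofReal_integral_eq_lintegral_ofReal hint (by
    refine (ae_restrict_iff' measurableSet_Ioo).2 (Filter.Eventually.of_forall ?_)
    intro t ht
    show (0:ℝ) ≤ 1 - t ^ (1/c)
    have h2 : t ^ (1/c) ≤ 1 := Real.rpow_le_one ht.1.le ht.2.le (by positivity)
    linarith)]
  congr 1
  rw [← integral_Ioc_eq_integral_Ioo, ← intervalIntegral.integral_of_le (by norm_num : (0:ℝ) ≤ 1)]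
  have hii : IntervalIntegrable (fun t : ℝ => t ^ (1/c)) volume 0 1 :=
    intervalIntegral.intervalIntegrable_rpow' (by linarith [one_div_pos.mpr hc])
  rw [intervalIntegral.integral_sub intervalIntegrable_const hii]
  rw [integral_rpow (Or.inl (by linarith [one_div_pos.mpr hc]))]
  rw [Real.one_rpow, Real.zero_rpow (by positivity)]
  simp only [intervalIntegral.integral_const, smul_eq_mul, sub_zero, mul_one]
  have hc1 : 1/c + 1 ≠ 0 := by positivity
  field_simp
  ring

/-- **The Gumbel-max trick.** If `G₁, …, G_n` are independent standard Gumbel random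
variables (CDF `x ↦ exp (−exp (−x))`), then almost surely the maximizer of `i ↦ θ_i + G_i` is
unique, and for every `j` the probability that `θ_j + G_j` strictly exceeds all the other
`θ_i + G_i` equals `exp θ_j / Σ_i exp θ_i`. -/
theorem gumbel_max_trick {Ω : Type*} {ℱ : MeasurableSpace Ω} (μ : Measure Ω)
    [IsProbabilityMeasure μ] (n : ℕ) (hn : 1 ≤ n) (θ : Fin n → ℝ)
    (G : Fin n → Ω → ℝ) (hGmeas : ∀ i, Measurable (G i))
    (hGindep : ProbabilityTheory.iIndepFun G μ)
    (hGcdf : ∀ i, ∀ x : ℝ,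
      (μ {ω | G i ω ≤ x}).toReal = Real.exp (-Real.exp (-x))) :
    (∀ᵐ ω ∂μ, ∃! j : Fin n, ∀ i, i ≠ j → θ i + G i ω < θ j + G j ω) ∧
    ∀ j : Fin n,
      (μ {ω | ∀ i, i ≠ j → θ i + G i ω < θ j + G j ω}).toReal
        = Real.exp (θ j) / ∑ i, Real.exp (θ i) := by
  classical
  have hΛpos : 0 < ∑ i, Real.exp (θ i) :=
    Finset.sum_pos (fun i _ => Real.exp_pos _) ⟨⟨0, hn⟩, Finset.mem_univ _⟩
  set Λ := ∑ i, Real.exp (θ i) with hΛ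
  have hcdf' : ∀ i x, μ {ω | G i ω ≤ x} = ENNReal.ofReal (Real.exp (-Real.exp (-x))) := by
    intro i x
    rw [← hGcdf i x, ENNReal.ofReal_toReal (measure_ne_top μ _)]
  have hlt : ∀ i y, μ {ω | G i ω < y} = ENNReal.ofReal (Real.exp (-Real.exp (-y))) :=
    fun i => gumbel_lt_aux μ (G i) (hcdf' i)
  have key : ∀ j, μ {ω | ∀ i, i ≠ j → θ i + G i ω < θ j + G j ω}
      = ENNReal.ofReal (Real.exp (θ j) / Λ) := by
    intro j
    set T : Finset (Fin n) := Finset.univ.erase j with hT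
    set c : ℝ := ∑ i ∈ T, Real.exp (θ i - θ j) with hc
    have hc0 : 0 ≤ c := Finset.sum_nonneg fun i _ => (Real.exp_pos _).le
    set g : Ω → ({ x // x ∈ T } → ℝ) := fun ω i => G i ω with hg
    have hgmeas : Measurable g := measurable_pi_lambda _ fun i => hGmeas i
    have hindep : ProbabilityTheory.IndepFun (G j) g μ := by
      have h := hGindep.indepFun_finset {j} T
        (Finset.disjoint_singleton_left.mpr (Finset.notMem_erase j _)) hGmeas
      exact h.comp (measurable_pi_apply ⟨j, Finset.mem_singleton_self j⟩) measurable_id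
    set E : Set (ℝ × ({ x // x ∈ T } → ℝ)) :=
      {p | ∀ i : { x // x ∈ T }, θ i + p.2 i < θ j + p.1} with hE
    have hEmeas : MeasurableSet E := by
      have hEeq : E = ⋂ i : { x // x ∈ T },
          {p : ℝ × ({ x // x ∈ T } → ℝ) | θ i + p.2 i < θ j + p.1} := by
        ext p; simp only [hE, mem_setOf_eq, Set.mem_iInter]
      rw [hEeq]
      exact MeasurableSet.iInter fun i => measurableSet_lt
        (measurable_const.add (measurable_snd.eval))
        (measurable_const.add measurable_fst)
    have hpre : {ω | ∀ i, i ≠ j → θ i + G i ω < θ j + G j ω}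
        = (fun ω => (G j ω, g ω)) ⁻¹' E := by
      ext ω
      simp only [Set.mem_setOf_eq, Set.mem_preimage, hE, hg]
      constructor
      · rintro h ⟨i, hi⟩
        exact h i (Finset.ne_of_mem_erase hi)
      · intro h i hij
        exact h ⟨i, Finset.mem_erase.2 ⟨hij, Finset.mem_univ _⟩⟩
    have hP1 : IsProbabilityMeasure (Measure.map g μ) :=
      Measure.isProbabilityMeasure_map hgmeas.aemeasurable
    have hP2 : IsProbabilityMeasure (Measure.map (G j) μ) :=
      Measure.isProbabilityMeasure_map (hGmeas j).aemeasurable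
    rw [hpre, ← Measure.map_apply ((hGmeas j).prodMk hgmeas) hEmeas,
      (ProbabilityTheory.indepFun_iff_map_prod_eq_prod_map_map (hGmeas j).aemeasurable
        hgmeas.aemeasurable).1 hindep,
      Measure.prod_apply hEmeas]
    have hslice : ∀ x : ℝ, (Measure.map g μ) (Prod.mk x ⁻¹' E)
        = ENNReal.ofReal (Real.exp (-(c * Real.exp (-x)))) := by
      intro x
      rw [Measure.map_apply hgmeas (measurable_prodMk_left hEmeas)]
      have hseteq : g ⁻¹' (Prod.mk x ⁻¹' E) = ⋂ i ∈ T, G i ⁻¹' Set.Iio (θ j + x - θ i) := by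
        ext ω
        simp only [Set.mem_preimage, hE, Set.mem_setOf_eq, Set.mem_iInter, Set.mem_Iio, hg]
        constructor
        · intro h i hi
          have := h ⟨i, hi⟩
          linarith
        · intro h i
          have := h i i.2
          linarith
      rw [hseteq, hGindep.meas_biInter
        (fun i hi => ⟨Set.Iio (θ j + x - θ i), measurableSet_Iio, rfl⟩)]
      have hprod : ∀ i ∈ T, μ (G i ⁻¹' Set.Iio (θ j + x - θ i))
          = ENNReal.ofReal (Real.exp (-Real.exp ((θ i - θ j) + -x))) := by
        intro i _
        have h := hlt i (θ j + x - θ i)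
        rw [show {ω | G i ω < θ j + x - θ i} = G i ⁻¹' Set.Iio (θ j + x - θ i) from rfl] at h
        rw [h]
        congr 3
        ring_nf
      rw [Finset.prod_congr rfl hprod,
        ← ENNReal.ofReal_prod_of_nonneg (fun i _ => (Real.exp_pos _).le)]
      congr 1
      rw [← Real.exp_sum]
      congr 1
      rw [hc, Finset.sum_mul, ← Finset.sum_neg_distrib]
      exact Finset.sum_congr rfl fun i _ => by rw [Real.exp_add]
    rw [lintegral_congr hslice,
      gumbel_lintegral_aux _ (fun x => by
        rw [Measure.map_apply (hGmeas j) measurableSet_Iic]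
        exact hcdf' j x) c hc0]
    congr 1
    have h1c : 1 + c = Λ / Real.exp (θ j) := by
      have huniv : (Finset.univ : Finset (Fin n)) = insert j T :=
        (Finset.insert_erase (Finset.mem_univ j)).symm
      have hdiv : Λ / Real.exp (θ j) = ∑ i, Real.exp (θ i - θ j) := by
        rw [hΛ, Finset.sum_div]
        exact Finset.sum_congr rfl fun i _ => (Real.exp_sub _ _).symm
      rw [hdiv, huniv, Finset.sum_insert (Finset.notMem_erase j _), sub_self, Real.exp_zero, hc]
    rw [h1c, one_div_div]
  have hAmeas : ∀ j, MeasurableSet {ω | ∀ i, i ≠ j → θ i + G i ω < θ j + G j ω} := by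
    intro j
    have heq : {ω | ∀ i, i ≠ j → θ i + G i ω < θ j + G j ω}
        = ⋂ i, ⋂ (_ : i ≠ j), {ω | θ i + G i ω < θ j + G j ω} := by
      ext ω; simp only [Set.mem_setOf_eq, Set.mem_iInter]
    rw [heq]
    exact MeasurableSet.iInter fun i => MeasurableSet.iInter fun _ =>
      measurableSet_lt (measurable_const.add (hGmeas i)) (measurable_const.add (hGmeas j))
  have hdisj : Pairwise (Function.onFun Disjoint
      (fun j => {ω | ∀ i, i ≠ j → θ i + G i ω < θ j + G j ω})) := by
    intro j k hjk
    rw [Function.onFun, Set.disjoint_left]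
    intro ω hj hk
    exact lt_asymm (hj k (Ne.symm hjk)) (hk j hjk)
  have hunion : μ (⋃ j, {ω | ∀ i, i ≠ j → θ i + G i ω < θ j + G j ω}) = 1 := by
    rw [measure_iUnion hdisj hAmeas, tsum_fintype]
    calc ∑ j, μ {ω | ∀ i, i ≠ j → θ i + G i ω < θ j + G j ω}
        = ∑ j, ENNReal.ofReal (Real.exp (θ j) / Λ) := Finset.sum_congr rfl fun j _ => key j
      _ = ENNReal.ofReal (∑ j, Real.exp (θ j) / Λ) :=
          (ENNReal.ofReal_sum_of_nonneg fun j _ =>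
            div_nonneg (Real.exp_pos _).le hΛpos.le).symm
      _ = 1 := by
          rw [← Finset.sum_div, ← hΛ, div_self (ne_of_gt hΛpos), ENNReal.ofReal_one]
  refine ⟨?_, fun j => by
    rw [key j, ENNReal.toReal_ofReal (div_nonneg (Real.exp_pos _).le hΛpos.le)]⟩
  rw [ae_iff]
  have hcompl : μ (⋃ j, {ω | ∀ i, i ≠ j → θ i + G i ω < θ j + G j ω})ᶜ = 0 := by
    rw [prob_compl_eq_zero_iff (MeasurableSet.iUnion hAmeas)]
    exact hunion
  apply measure_mono_null _ hcompl
  · intro ω hω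
    simp only [Set.mem_compl_iff, Set.mem_iUnion, Set.mem_setOf_eq] at *
    intro ⟨j, hj⟩
    refine hω ⟨j, hj, ?_⟩
    intro k hk
    by_contra hne
    exact lt_asymm (hj k hne) (hk j (Ne.symm hne))
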